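/- arXiv:2410.22415 — 3 statements merged into one kernel-verified Lean document; each statement's English description precedes it below -/
import Mathlib

section
/- Let D be a natural number with D ≥ 4 and let α be a real number with (D:ℝ) + α > 0. Consider the spectrum consisting of D−1 entries equal to 1/(D+α) and one entry equal to (1+α)/(D+α); its three smallest entries are λ₀ = min((1+α)/(D+α), 1/(D+α)), λ₁ = λ₂ = 1/(D+α), and its largest entry is λ_top = max((1+α)/(D+α), 1/(D+α)). Then the real 2×2 matrix !![2*λ₀, λ₁ − λ_top; λ₁ − λ_top, 2*λ₂] is positive semidefinite if and only if −1 ≤ α ∧ α ≤ 2. -/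
open Matrix

lemma psd_two_iff (a b c : ℝ) :
    Matrix.PosSemidef !![a, b; b, c] ↔ 0 ≤ a ∧ 0 ≤ c ∧ b ^ 2 ≤ a * c := by
  rw [Matrix.posSemidef_iff_dotProduct_mulVec]
  constructor
  · rintro ⟨-, h⟩
    have key : ∀ x y : ℝ, 0 ≤ a * x ^ 2 + 2 * b * x * y + c * y ^ 2 := by
      intro x y
      have := h ![x, y]
      simp [Matrix.mulVec, dotProduct, Fin.sum_univ_two] at this
      nlinarith [this]
    have ha : 0 ≤ a := by have := key 1 0; linarith
    have hc : 0 ≤ c := by have := key 0 1; linarith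
    refine ⟨ha, hc, ?_⟩
    by_cases hc0 : c = 0
    · subst hc0
      have hb : b = 0 := by
        by_contra hb
        have h1 := key 1 (-(a+1)/(2*b))
        have he : 2 * b * 1 * (-(a+1)/(2*b)) = -(a+1) := by field_simp
        rw [he] at h1
        nlinarith
      simp [hb]
    · have := key c (-b)
      have hc' : 0 < c := lt_of_le_of_ne hc (Ne.symm hc0)
      nlinarith
  · rintro ⟨ha, hc, hb⟩
    refine ⟨?_, ?_⟩
    · unfold Matrix.IsHermitian
      ext i j
      fin_cases i <;> fin_cases j <;> simp
    · intro x
      have e : dotProduct (star x) (!![a, b; b, c] *ᵥ x)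
          = a * x 0 ^ 2 + 2 * b * x 0 * x 1 + c * x 1 ^ 2 := by
        simp [Matrix.mulVec, dotProduct, Fin.sum_univ_two]
        ring
      rw [e]
      rcases eq_or_lt_of_le ha with ha0 | ha0
      · have hb0 : b = 0 := by nlinarith [sq_nonneg b]
        rw [← ha0, hb0]; nlinarith [mul_nonneg hc (sq_nonneg (x 1))]
      · nlinarith [sq_nonneg (a * x 0 + b * x 1), mul_pos ha0 ha0]

/-- The first 2×2 block of Hildebrand's LMI, evaluated on the spectrum of the
normalized image of a pure state under the reduction-like map `Λ_α`, is positive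
semidefinite exactly for `α ∈ [−1, 2]`. -/
theorem hildebrand_block_psd_iff (D : ℕ) (hD : 4 ≤ D) (α : ℝ)
    (hα : (D : ℝ) + α > 0) :
    (Matrix.PosSemidef
      !![2 * min ((1 + α) / ((D : ℝ) + α)) (1 / ((D : ℝ) + α)),
           1 / ((D : ℝ) + α) - max ((1 + α) / ((D : ℝ) + α)) (1 / ((D : ℝ) + α));
         1 / ((D : ℝ) + α) - max ((1 + α) / ((D : ℝ) + α)) (1 / ((D : ℝ) + α)),
           2 * (1 / ((D : ℝ) + α))]) ↔ (-1 ≤ α ∧ α ≤ 2) := by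
  set s : ℝ := (D : ℝ) + α with hs
  rw [psd_two_iff]
  have hs0 : 0 < s := hα
  rcases le_or_gt α 0 with hneg | hpos
  · have hmin : min ((1 + α) / s) (1 / s) = (1 + α) / s :=
      min_eq_left ((div_le_div_iff_of_pos_right hs0).mpr (by linarith))
    have hmax : max ((1 + α) / s) (1 / s) = 1 / s :=
      max_eq_right ((div_le_div_iff_of_pos_right hs0).mpr (by linarith))
    rw [hmin, hmax]
    constructor
    · rintro ⟨h1, -, -⟩
      have : 0 ≤ 1 + α := by
        by_contra h
        push_neg at h
        have : (1 + α) / s < 0 := div_neg_of_neg_of_pos (by linarith) hs0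
        linarith
      exact ⟨by linarith, by linarith⟩
    · rintro ⟨h1, -⟩
      have ha : 0 ≤ (1 + α) / s := div_nonneg (by linarith) hs0.le
      refine ⟨by linarith, by positivity, ?_⟩
      simp only [sub_self]
      have h2s : (0:ℝ) ≤ 2 * (1 / s) := by positivity
      nlinarith
  · have hmin : min ((1 + α) / s) (1 / s) = 1 / s :=
      min_eq_right ((div_le_div_iff_of_pos_right hs0).mpr (by linarith))
    have hmax : max ((1 + α) / s) (1 / s) = (1 + α) / s :=
      max_eq_left ((div_le_div_iff_of_pos_right hs0).mpr (by linarith))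
    rw [hmin, hmax]
    have hdiff : 1 / s - (1 + α) / s = -α / s := by ring
    rw [hdiff]
    have hs2 : (0:ℝ) < s ^ 2 := by positivity
    have hrw : 2 * (1 / s) * (2 * (1 / s)) = 4 / s ^ 2 := by field_simp; ring
    constructor
    · rintro ⟨-, -, h3⟩
      refine ⟨by linarith, ?_⟩
      rw [div_pow, neg_sq, hrw] at h3
      have h4 : α ^ 2 ≤ 4 := (div_le_div_iff_of_pos_right hs2).mp h3
      nlinarith
    · rintro ⟨-, h2⟩
      refine ⟨by positivity, by positivity, ?_⟩
      rw [div_pow, neg_sq, hrw]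
      exact (div_le_div_iff_of_pos_right hs2).mpr (by nlinarith)
end

section
/- Let D be a natural number with D ≥ 2 and set m = (D+1)/3 (natural-number division, i.e. m = ⌊(D+1)/3⌋). Let v₊ : Fin D → ℝ be the vector with one entry equal to 3/(D+2) and all other entries equal to 1/(D+2), and let v₋ : Fin D → ℝ be the vector with one entry equal to 0 and all other entries equal to 1/(D−1). Let K ⊆ (Fin D → ℝ) be the set of all coordinate permutations of v₊ and of v₋. If λ : Fin D → ℝ is monotone nondecreasing and λ belongs to the convex hull (over ℝ) of K, then 3 * (∑ i < m, λ i) + ((D:ℝ) + 2 − 3*m) * λ m ≥ 1. -/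
open Finset

/-- Proposition 1 (Eq. (7)): any nondecreasingly ordered spectrum in the convex hull of
all coordinate permutations of the two extremal vertices `v₊` and `v₋` satisfies
`3·∑_{i<m} λ_i + (D+2−3m)·λ_m ≥ 1`, where `m = ⌊(D+1)/3⌋`. -/
theorem convex_hull_two_simplex_inequality (D : ℕ) (hD : 2 ≤ D)
    (lam : Fin D → ℝ) (hmono : Monotone lam)
    (hhull : lam ∈ convexHull ℝ
      {v : Fin D → ℝ | ∃ π : Equiv.Perm (Fin D),
        v = (fun i => if i = (⟨0, by omega⟩ : Fin D) then 3 / ((D : ℝ) + 2)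
              else 1 / ((D : ℝ) + 2)) ∘ π ∨
        v = (fun i => if i = (⟨0, by omega⟩ : Fin D) then 0
              else 1 / ((D : ℝ) - 1)) ∘ π}) :
    3 * (∑ i ∈ Finset.univ.filter (fun i : Fin D => (i : ℕ) < (D + 1) / 3), lam i)
      + ((D : ℝ) + 2 - 3 * (((D + 1) / 3 : ℕ) : ℝ)) * lam ⟨(D + 1) / 3, by omega⟩ ≥ 1 := by
  set m : ℕ := (D + 1) / 3 with hm
  have hmD : m < D := by omega
  have h3m1 : 3 * m ≤ D + 1 := by omega
  have h3m2 : D ≤ 3 * m + 1 := by omega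
  have hDpos : (0:ℝ) < (D:ℝ) + 2 := by positivity
  have hDm1 : (0:ℝ) < (D:ℝ) - 1 := by
    have : (2:ℝ) ≤ (D:ℝ) := by exact_mod_cast hD
    linarith
  have hm1 : (3:ℝ) * m ≤ (D:ℝ) + 1 := by exact_mod_cast h3m1
  have hm2 : (D:ℝ) ≤ 3 * m + 1 := by exact_mod_cast h3m2
  set S : Finset (Fin D) := Finset.univ.filter (fun i : Fin D => (i : ℕ) < m) with hS
  have hcard : S.card = m := by
    have : S = Finset.Iio (⟨m, hmD⟩ : Fin D) := by
      ext i; simp [hS, Fin.lt_def]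
    rw [this, Fin.card_Iio]
  have hmS : (⟨m, hmD⟩ : Fin D) ∉ S := by simp [hS]
  set c : ℝ := (D:ℝ) + 2 - 3 * m with hc
  set L : (Fin D → ℝ) → ℝ := fun v => 3 * ∑ i ∈ S, v i + c * v ⟨m, hmD⟩ with hL
  have hlin : IsLinearMap ℝ L := by
    constructor
    · intro x y
      simp only [hL, Pi.add_apply, Finset.sum_add_distrib]; ring
    · intro r x
      simp only [hL, Pi.smul_apply, smul_eq_mul, ← Finset.mul_sum]; ring
  -- key computation: sum of an ite over S
  have sum_ite : ∀ (j : Fin D) (a b : ℝ),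
      (∑ i ∈ S, (if i = j then a else b)) = m * b + (if j ∈ S then a - b else 0) := by
    intro j a b
    have : ∀ i ∈ S, (if i = j then a else b) = b + (if i = j then a - b else 0) := by
      intro i _; by_cases h : i = j <;> simp [h]
    rw [Finset.sum_congr rfl this, Finset.sum_add_distrib, Finset.sum_const, hcard,
      Finset.sum_ite_eq' S j (fun _ => a - b)]
    simp [mul_comm]
  have key : {v : Fin D → ℝ | ∃ π : Equiv.Perm (Fin D),
        v = (fun i => if i = (⟨0, by omega⟩ : Fin D) then 3 / ((D : ℝ) + 2)
              else 1 / ((D : ℝ) + 2)) ∘ π ∨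
        v = (fun i => if i = (⟨0, by omega⟩ : Fin D) then 0
              else 1 / ((D : ℝ) - 1)) ∘ π} ⊆ {v | 1 ≤ L v} := by
    have hne1 : ((D:ℝ) + 2) ≠ 0 := ne_of_gt hDpos
    have hne2 : ((D:ℝ) - 1) ≠ 0 := ne_of_gt hDm1
    rintro v ⟨π, hv | hv⟩ <;>
    · subst hv
      set z : Fin D := (⟨0, by omega⟩ : Fin D)
      have hiff : ∀ i : Fin D, π i = z ↔ i = π.symm z := by
        intro i; exact (Equiv.apply_eq_iff_eq_symm_apply π)
      simp only [Set.mem_setOf_eq, hL, Function.comp_apply]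
      simp only [hiff]
      rw [sum_ite]
      by_cases hjm : π.symm z = ⟨m, hmD⟩
      · rw [hjm, if_neg hmS, if_pos rfl, hc]
        field_simp
        linarith [hm1, hm2]
      · rw [if_neg (show ¬(⟨m, hmD⟩ : Fin D) = π.symm z from fun h => hjm h.symm)]
        by_cases hjS : π.symm z ∈ S
        · rw [if_pos hjS, hc]
          field_simp
          linarith [hm1, hm2]
        · rw [if_neg hjS, hc]
          field_simp
          all_goals
            linarith [hm1, hm2]
  have hsub := convexHull_min key (convex_halfSpace_ge hlin 1)
  have := hsub hhull
  simpa [hL, ge_iff_le, hS, hc, hm] using this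
end

section
/- Let d, m, k be natural numbers with d ≥ 1. Let σ : Matrix ((Fin m → Fin d) × (Fin k → Fin d)) ((Fin m → Fin d) × (Fin k → Fin d)) ℂ be positive semidefinite and suppose σ − (1/((d:ℝ)^(m+k) + 2) : ℂ) • 1 is positive semidefinite. Define the partial trace τ : Matrix (Fin m → Fin d) (Fin m → Fin d) ℂ by τ a b = ∑ c : Fin k → Fin d, σ (a, c) (b, c). Then τ − (1/((d:ℝ)^m + 2) : ℂ) • 1 is positive semidefinite. -/
open Matrix ComplexOrder

lemma psd_add' {n : Type*} [Fintype n] {A B : Matrix n n ℂ}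
    (hA : A.PosSemidef) (hB : B.PosSemidef) : (A + B).PosSemidef :=
  .of_dotProduct_mulVec_nonneg (hA.1.add hB.1) fun x => by
    rw [add_mulVec, dotProduct_add]
    exact add_nonneg (hA.dotProduct_mulVec_nonneg x) (hB.dotProduct_mulVec_nonneg x)

lemma ptrace_posSemidef {α β : Type*} [Fintype α] [Fintype β] [DecidableEq β]
    (M : Matrix (α × β) (α × β) ℂ) (hM : M.PosSemidef) :
    (Matrix.of fun a b : α => ∑ c : β, M (a, c) (b, c)).PosSemidef := by
  refine .of_dotProduct_mulVec_nonneg ?_ ?_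
  · ext a b
    simp only [conjTranspose_apply, of_apply, star_sum]
    exact Finset.sum_congr rfl fun c _ => hM.1.apply (a, c) (b, c)
  · intro x
    have key : star x ⬝ᵥ (Matrix.of fun a b : α => ∑ c : β, M (a, c) (b, c)) *ᵥ x
        = ∑ c : β, star (fun p : α × β => if p.2 = c then x p.1 else 0) ⬝ᵥ
            M *ᵥ (fun p : α × β => if p.2 = c then x p.1 else 0) := by
      simp only [dotProduct, mulVec, Pi.star_apply, of_apply, Finset.mul_sum,
        Finset.sum_mul, Fintype.sum_prod_type, apply_ite, star_zero, mul_ite, mul_zero,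
        ite_mul, zero_mul, Finset.sum_ite_eq', Finset.mem_univ, if_true,
        Finset.sum_ite_irrel, Finset.sum_const_zero]
      exact (Finset.sum_congr rfl fun a _ => Finset.sum_comm).trans Finset.sum_comm
    rw [key]
    exact Finset.sum_nonneg fun c _ => hM.dotProduct_mulVec_nonneg _

/-- Eq. (9): if a state `σ` on `m + k` qudits of local dimension `d` satisfies
`σ ≥ 𝟙/(d^{m+k}+2)`, then its reduced state `τ` after tracing out `k` qudits
satisfies `τ ≥ 𝟙/(d^m+2)`. -/
theorem reduced_state_inverse_reduction_condition {d m k : ℕ} (hd : 1 ≤ d)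
    (σ : Matrix ((Fin m → Fin d) × (Fin k → Fin d)) ((Fin m → Fin d) × (Fin k → Fin d)) ℂ)
    (hσ : σ.PosSemidef)
    (h : (σ - ((1 / ((d : ℝ) ^ (m + k) + 2) : ℝ) : ℂ) •
      (1 : Matrix ((Fin m → Fin d) × (Fin k → Fin d)) ((Fin m → Fin d) × (Fin k → Fin d)) ℂ)).PosSemidef) :
    ((Matrix.of fun a b : Fin m → Fin d => ∑ c : Fin k → Fin d, σ (a, c) (b, c)) -
      ((1 / ((d : ℝ) ^ m + 2) : ℝ) : ℂ) •
        (1 : Matrix (Fin m → Fin d) (Fin m → Fin d) ℂ)).PosSemidef := by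
  have hd1 : (1:ℝ) ≤ (d:ℝ) := by exact_mod_cast hd
  have hdk : (1:ℝ) ≤ (d:ℝ) ^ k := one_le_pow₀ hd1
  have hpos1 : (0:ℝ) < (d:ℝ) ^ m + 2 := by positivity
  have hpos2 : (0:ℝ) < (d:ℝ) ^ (m+k) + 2 := by positivity
  set c0 : ℝ := 1 / ((d : ℝ) ^ (m + k) + 2) with hc0
  set c : ℝ := 1 / ((d : ℝ) ^ m + 2) with hc
  have hr : (0:ℝ) ≤ (d:ℝ)^k * c0 - c := by
    rw [sub_nonneg, hc0, hc, mul_one_div]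
    rw [div_le_div_iff₀ hpos1 hpos2]
    have : (d:ℝ)^(m+k) = (d:ℝ)^m * (d:ℝ)^k := pow_add _ _ _
    nlinarith [hdk, pow_pos (lt_of_lt_of_le one_pos hd1) m]
  have hA := ptrace_posSemidef _ h
  have hB : ((((d:ℝ)^k * c0 - c : ℝ) : ℂ) •
      (1 : Matrix (Fin m → Fin d) (Fin m → Fin d) ℂ)).PosSemidef := by
    rw [smul_one_eq_diagonal]
    exact PosSemidef.diagonal fun _ => by
      simpa using Complex.zero_le_real.mpr hr
  have heq : ((Matrix.of fun a b : Fin m → Fin d => ∑ c : Fin k → Fin d, σ (a, c) (b, c)) -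
      ((c : ℝ) : ℂ) • (1 : Matrix (Fin m → Fin d) (Fin m → Fin d) ℂ)) =
      (Matrix.of fun a b : Fin m → Fin d => ∑ c' : Fin k → Fin d,
        (σ - ((c0 : ℝ) : ℂ) • 1) (a, c') (b, c')) +
      (((d:ℝ)^k * c0 - c : ℝ) : ℂ) • (1 : Matrix (Fin m → Fin d) (Fin m → Fin d) ℂ) := by
    ext a b
    simp only [Matrix.sub_apply, Matrix.add_apply, Matrix.smul_apply, Matrix.of_apply,
      Matrix.one_apply, Prod.mk.injEq, Finset.sum_sub_distrib, smul_eq_mul]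
    by_cases hab : a = b
    · subst hab
      simp only [if_true, true_and, Finset.sum_ite_eq, Finset.mem_univ, Finset.sum_const,
        Finset.card_univ, nsmul_eq_mul, mul_one]
      have : (Fintype.card (Fin k → Fin d) : ℂ) = (d:ℂ)^k := by
        simp [Fintype.card_fun]
      rw [this]
      push_cast
      ring
    · simp only [hab, if_false, false_and, mul_zero, sub_zero, add_zero]
      simp
  rw [heq]
  exact psd_add' hA hB
end
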